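/- arXiv:0903.2096 — 3 statements merged into one kernel-verified Lean document; each statement's English description precedes it below -/
import Mathlib

section
/- Let G be a group and let S ⊆ G[x₁,…,xₙ] and S' ⊆ G[y₁,…,y_m] be two systems of equations over G. Then the algebraic sets V_G(S) and V_G(S') are isomorphic if and only if the coordinate groups G_{R(S)} and G_{R(S')} are G-isomorphic. -/
/-!  Basic algebraic geometry over a group `K` (Baumslag–Miasnikov–Remeslennikov).
`GX K V = K ∗ F(V)` is the group of words in variables `V` with constants in `K`;
`eval v` is the evaluation homomorphism determined by an assignment `v : V → K`;
`VG S` is the algebraic set (solution set) of a system `S ⊆ GX K V`;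
`radical S` is the radical of `S` and `Coord S = (K ∗ F(V)) ⧸ radical S`
its coordinate group. -/

namespace EqAlg

section Defs

variable (K : Type*) [Group K] (V : Type*)

/-- `K[X]`: the group of words in variables `V` with constants from `K`,
i.e. the free product `K ∗ F(V)`. -/
abbrev GX := Monoid.Coprod K (FreeGroup V)

variable {K V}

/-- Evaluation at the assignment `v : V → K`: the unique homomorphism
`K[X] → K` restricting to the identity on `K` and sending the variable `x` to `v x`. -/
def eval (v : V → K) : GX K V →* K :=
  Monoid.Coprod.lift (MonoidHom.id K) (FreeGroup.lift v)

/-- The algebraic set `V_K(S)` of the system `S`: all assignments of the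
variables killing every element of `S`. -/
def VG (S : Set (GX K V)) : Set (V → K) := { v | ∀ w ∈ S, eval v w = 1 }

/-- The radical `R(S)`: the intersection of the kernels of all solutions of `S`
(the whole group if `S` has no solutions). -/
def radical (S : Set (GX K V)) : Subgroup (GX K V) :=
  ⨅ v ∈ VG S, (eval v).ker

instance radical_normal (S : Set (GX K V)) : (radical S).Normal := by
  constructor
  intro x hx g
  simp only [radical, Subgroup.mem_iInf] at hx ⊢
  intro v hv
  exact (MonoidHom.normal_ker (eval v)).conj_mem x (hx v hv) g

/-- The coordinate group `K_{R(S)} = K[X]/R(S)` of the system `S`. -/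
abbrev Coord (S : Set (GX K V)) := GX K V ⧸ radical S

/-- The canonical homomorphism `K[X] → K_{R(S)}`. -/
abbrev coordMk (S : Set (GX K V)) : GX K V →* Coord S := QuotientGroup.mk' (radical S)

/-- The canonical homomorphism `K → K_{R(S)}`. -/
def coordOf (S : Set (GX K V)) : K →* Coord S :=
  (coordMk S).comp Monoid.Coprod.inl

end Defs

/-- A group `K` is equationally Noetherian if every system of equations over `K`
in finitely many variables is equivalent to a finite subsystem. -/
def EquationallyNoetherian (K : Type*) [Group K] : Prop :=
  ∀ (n : ℕ) (S : Set (GX K (Fin n))), ∃ S₀ ⊆ S, S₀.Finite ∧ VG S₀ = VG S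


section AuxLemmas

variable {K V : Type*} [Group K]

theorem eval_inl (v : V → K) (g : K) : eval v (Monoid.Coprod.inl g) = g :=
  Monoid.Coprod.lift_apply_inl _ _ _

theorem eval_inr_of (v : V → K) (x : V) :
    eval v (Monoid.Coprod.inr (FreeGroup.of x)) = v x := by
  simp [eval, Monoid.Coprod.lift_apply_inr]

theorem gx_hom_ext {M : Type*} [Group M] {f g : GX K V →* M}
    (h1 : ∀ k : K, f (Monoid.Coprod.inl k) = g (Monoid.Coprod.inl k))
    (h2 : ∀ x : V,
      f (Monoid.Coprod.inr (FreeGroup.of x)) = g (Monoid.Coprod.inr (FreeGroup.of x))) :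
    f = g := by
  refine Monoid.Coprod.hom_ext (MonoidHom.ext h1) ?_
  exact FreeGroup.ext_hom _ _ h2

theorem mem_radical {S : Set (GX K V)} {x : GX K V} :
    x ∈ radical S ↔ ∀ v ∈ VG S, eval v x = 1 := by
  simp [radical, Subgroup.mem_iInf, MonoidHom.mem_ker]

/-- The induced evaluation map on the coordinate group. -/
def evalBar {S : Set (GX K V)} {v : V → K} (hv : v ∈ VG S) : Coord S →* K :=
  QuotientGroup.lift _ (eval v) fun _ hx => mem_radical.mp hx v hv

theorem evalBar_mk {S : Set (GX K V)} {v : V → K} (hv : v ∈ VG S) (w : GX K V) :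
    evalBar hv (coordMk S w) = eval v w := rfl

end AuxLemmas

section Morphisms

variable {G : Type*} [Group G] {n m : ℕ}

/-- `θ` is a morphism of algebraic sets `V_G(S) → V_G(S')`: on `V_G(S)` it is given
coordinatewise by evaluation of words `f₁, …, f_m ∈ G[x₁,…,xₙ]`, and it maps
`V_G(S)` into `V_G(S')`. -/
def IsMorphism (S : Set (GX G (Fin n))) (S' : Set (GX G (Fin m)))
    (θ : (Fin n → G) → (Fin m → G)) : Prop :=
  (∃ f : Fin m → GX G (Fin n), ∀ v ∈ VG S, ∀ j, θ v j = eval v (f j)) ∧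
  ∀ v ∈ VG S, θ v ∈ VG S'

/-- The algebraic sets `V_G(S)` and `V_G(S')` are isomorphic: there are mutually
inverse morphisms between them. -/
def AlgSetIsomorphic (S : Set (GX G (Fin n))) (S' : Set (GX G (Fin m))) : Prop :=
  ∃ θ ψ, IsMorphism S S' θ ∧ IsMorphism S' S ψ ∧
    (∀ v ∈ VG S, ψ (θ v) = v) ∧ (∀ v ∈ VG S', θ (ψ v) = v)

/-- The coordinate groups of `S` and `S'` are `G`-isomorphic: there is a group
isomorphism commuting with the canonical homomorphisms from `G`. -/
def CoordGIsomorphic (S : Set (GX G (Fin n))) (S' : Set (GX G (Fin m))) : Prop :=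
  ∃ e : Coord S ≃* Coord S', ∀ g : G, e (coordOf S g) = coordOf S' g

/-- Two algebraic sets over a group `G` are isomorphic if and
only if their coordinate groups are `G`-isomorphic. -/
theorem algSetIsomorphic_iff_coordGIsomorphic
    (S : Set (GX G (Fin n))) (S' : Set (GX G (Fin m))) :
    AlgSetIsomorphic S S' ↔ CoordGIsomorphic S S' := by
  constructor
  · rintro ⟨θ, ψ, ⟨⟨f, hf⟩, hθ⟩, ⟨⟨h, hh⟩, hψ⟩, hψθ, hθψ⟩
    set Φ : GX G (Fin m) →* GX G (Fin n) :=
      Monoid.Coprod.lift Monoid.Coprod.inl (FreeGroup.lift f) with hΦ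
    set Ψ : GX G (Fin n) →* GX G (Fin m) :=
      Monoid.Coprod.lift Monoid.Coprod.inl (FreeGroup.lift h) with hΨ
    have keyΦ : ∀ v ∈ VG S, (eval v).comp Φ = eval (θ v) := by
      intro v hv
      apply gx_hom_ext
      · intro k
        simp [hΦ, Monoid.Coprod.lift_apply_inl, eval_inl]
      · intro j
        simp only [MonoidHom.comp_apply, hΦ, Monoid.Coprod.lift_apply_inr,
          FreeGroup.lift_apply_of, eval_inr_of]
        exact (hf v hv j).symm
    have keyΨ : ∀ v ∈ VG S', (eval v).comp Ψ = eval (ψ v) := by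
      intro v hv
      apply gx_hom_ext
      · intro k
        simp [hΨ, Monoid.Coprod.lift_apply_inl, eval_inl]
      · intro i
        simp only [MonoidHom.comp_apply, hΨ, Monoid.Coprod.lift_apply_inr,
          FreeGroup.lift_apply_of, eval_inr_of]
        exact (hh v hv i).symm
    have hΦrad : ∀ x ∈ radical S', Φ x ∈ radical S := by
      intro x hx
      rw [mem_radical]
      intro v hv
      have h1 : eval v (Φ x) = eval (θ v) x := DFunLike.congr_fun (keyΦ v hv) x
      rw [h1]
      exact mem_radical.mp hx (θ v) (hθ v hv)
    have hΨrad : ∀ x ∈ radical S, Ψ x ∈ radical S' := by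
      intro x hx
      rw [mem_radical]
      intro v hv
      have h1 : eval v (Ψ x) = eval (ψ v) x := DFunLike.congr_fun (keyΨ v hv) x
      rw [h1]
      exact mem_radical.mp hx (ψ v) (hψ v hv)
    set Φbar : Coord S' →* Coord S :=
      QuotientGroup.lift _ ((coordMk S).comp Φ)
        (fun x hx => (QuotientGroup.eq_one_iff _).mpr (hΦrad x hx)) with hΦbar
    set Ψbar : Coord S →* Coord S' :=
      QuotientGroup.lift _ ((coordMk S').comp Ψ)
        (fun x hx => (QuotientGroup.eq_one_iff _).mpr (hΨrad x hx)) with hΨbar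
    have comp1 : Φbar.comp Ψbar = MonoidHom.id (Coord S) := by
      apply QuotientGroup.monoidHom_ext
      apply MonoidHom.ext
      intro x
      show coordMk S (Φ (Ψ x)) = coordMk S x
      refine (QuotientGroup.eq).mpr (mem_radical.mpr ?_)
      intro v hv
      have e1 : eval v (Φ (Ψ x)) = eval (θ v) (Ψ x) := DFunLike.congr_fun (keyΦ v hv) (Ψ x)
      have e2 : eval (θ v) (Ψ x) = eval (ψ (θ v)) x :=
        DFunLike.congr_fun (keyΨ (θ v) (hθ v hv)) x
      rw [map_mul, map_inv, e1, e2, hψθ v hv, inv_mul_cancel]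
    have comp2 : Ψbar.comp Φbar = MonoidHom.id (Coord S') := by
      apply QuotientGroup.monoidHom_ext
      apply MonoidHom.ext
      intro x
      show coordMk S' (Ψ (Φ x)) = coordMk S' x
      refine (QuotientGroup.eq).mpr (mem_radical.mpr ?_)
      intro v hv
      have e1 : eval v (Ψ (Φ x)) = eval (ψ v) (Φ x) := DFunLike.congr_fun (keyΨ v hv) (Φ x)
      have e2 : eval (ψ v) (Φ x) = eval (θ (ψ v)) x :=
        DFunLike.congr_fun (keyΦ (ψ v) (hψ v hv)) x
      rw [map_mul, map_inv, e1, e2, hθψ v hv, inv_mul_cancel]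
    refine ⟨Ψbar.toMulEquiv Φbar comp1 comp2, ?_⟩
    intro g
    show Ψbar (coordMk S (Monoid.Coprod.inl g)) = coordOf S' g
    show coordMk S' (Ψ (Monoid.Coprod.inl g)) = coordOf S' g
    rw [hΨ, Monoid.Coprod.lift_apply_inl]
    rfl
  · rintro ⟨e, he⟩
    classical
    have hesymm : ∀ g : G, e.symm (coordOf S' g) = coordOf S g := fun g => by
      rw [← he g, MulEquiv.symm_apply_apply]
    choose fw hfw using fun j : Fin m =>
      QuotientGroup.mk'_surjective (radical S)
        (e.symm (coordMk S' (Monoid.Coprod.inr (FreeGroup.of j))))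
    choose hw hhw using fun i : Fin n =>
      QuotientGroup.mk'_surjective (radical S')
        (e (coordMk S (Monoid.Coprod.inr (FreeGroup.of i))))
    set θ : (Fin n → G) → (Fin m → G) := fun v j =>
      if hv : v ∈ VG S then
        evalBar hv (e.symm (coordMk S' (Monoid.Coprod.inr (FreeGroup.of j))))
      else 1 with hθdef
    set ψ : (Fin m → G) → (Fin n → G) := fun v i =>
      if hv : v ∈ VG S' then
        evalBar hv (e (coordMk S (Monoid.Coprod.inr (FreeGroup.of i))))
      else 1 with hψdef
    have keyθ : ∀ v (hv : v ∈ VG S),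
        eval (θ v) = ((evalBar hv).comp e.symm.toMonoidHom).comp (coordMk S') := by
      intro v hv
      apply gx_hom_ext
      · intro k
        rw [eval_inl]
        show _ = evalBar hv (e.symm (coordOf S' k))
        rw [hesymm k]
        show _ = evalBar hv (coordMk S (Monoid.Coprod.inl k))
        rw [evalBar_mk, eval_inl]
      · intro j
        rw [eval_inr_of]
        show θ v j = _
        rw [hθdef]
        simp only [dif_pos hv]
        rfl
    have keyψ : ∀ v (hv : v ∈ VG S'),
        eval (ψ v) = ((evalBar hv).comp e.toMonoidHom).comp (coordMk S) := by
      intro v hv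
      apply gx_hom_ext
      · intro k
        rw [eval_inl]
        show _ = evalBar hv (e (coordOf S k))
        rw [he k]
        show _ = evalBar hv (coordMk S' (Monoid.Coprod.inl k))
        rw [evalBar_mk, eval_inl]
      · intro i
        rw [eval_inr_of]
        show ψ v i = _
        rw [hψdef]
        simp only [dif_pos hv]
        rfl
    have hθmem : ∀ v ∈ VG S, θ v ∈ VG S' := by
      intro v hv w hw
      have hw1 : coordMk S' w = 1 :=
        (QuotientGroup.eq_one_iff _).mpr (mem_radical.mpr fun v' hv' => hv' w hw)
      have := DFunLike.congr_fun (keyθ v hv) w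
      simp only [MonoidHom.comp_apply] at this
      rw [this, hw1, map_one, map_one]
    have hψmem : ∀ v ∈ VG S', ψ v ∈ VG S := by
      intro v hv w hw
      have hw1 : coordMk S w = 1 :=
        (QuotientGroup.eq_one_iff _).mpr (mem_radical.mpr fun v' hv' => hv' w hw)
      have := DFunLike.congr_fun (keyψ v hv) w
      simp only [MonoidHom.comp_apply] at this
      rw [this, hw1, map_one, map_one]
    have hbarθ : ∀ v (hv : v ∈ VG S),
        evalBar (hθmem v hv) = (evalBar hv).comp e.symm.toMonoidHom := by
      intro v hv
      apply QuotientGroup.monoidHom_ext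
      apply MonoidHom.ext
      intro w
      have := DFunLike.congr_fun (keyθ v hv) w
      simp only [MonoidHom.comp_apply] at this ⊢
      rw [← this]
      rfl
    have hbarψ : ∀ v (hv : v ∈ VG S'),
        evalBar (hψmem v hv) = (evalBar hv).comp e.toMonoidHom := by
      intro v hv
      apply QuotientGroup.monoidHom_ext
      apply MonoidHom.ext
      intro w
      have := DFunLike.congr_fun (keyψ v hv) w
      simp only [MonoidHom.comp_apply] at this ⊢
      rw [← this]
      rfl
    refine ⟨θ, ψ, ⟨⟨fw, ?_⟩, hθmem⟩, ⟨⟨hw, ?_⟩, hψmem⟩, ?_, ?_⟩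
    · intro v hv j
      rw [hθdef]
      simp only [dif_pos hv]
      rw [← hfw j]
      rfl
    · intro v hv i
      rw [hψdef]
      simp only [dif_pos hv]
      rw [← hhw i]
      rfl
    · intro v hv
      funext i
      show ψ (θ v) i = v i
      rw [hψdef]
      simp only [dif_pos (hθmem v hv)]
      rw [hbarθ v hv]
      simp only [MonoidHom.comp_apply, MulEquiv.coe_toMonoidHom, MulEquiv.symm_apply_apply]
      rw [evalBar_mk, eval_inr_of]
    · intro v hv
      funext j
      show θ (ψ v) j = v j
      rw [hθdef]
      simp only [dif_pos (hψmem v hv)]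
      rw [hbarψ v hv]
      simp only [MonoidHom.comp_apply, MulEquiv.coe_toMonoidHom, MulEquiv.apply_symm_apply]
      rw [evalBar_mk, eval_inr_of]

end Morphisms

end EqAlg
end

section
/- Let G = G₁ ∗ G₂ be the free product of two groups and let u, v, w ∈ G satisfy u v w = 1. Then there exist elements p, q, r ∈ G, an index k ∈ {1,2}, and elements c₁, c₂, c₃ of the free factor G_k with c₁ c₂ c₃ = 1, such that u = p c₁ q⁻¹, v = q c₂ r⁻¹ and w = r c₃ p⁻¹, and each of these three products is reduced as written: |u| = |p| + |c₁| + |q|, |v| = |q| + |c₂| + |r| and |w| = |r| + |c₃| + |p|. (This is the content of the cancellation-scheme analysis: the cancellation in a product of three reduced words equal to 1 in a free product follows one of finitely many schemes, with the middle cancellation taking place in a single free factor.) -/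
/-!  Normal forms in a free product `G = G₁ ∗ G₂` (modelled as `Monoid.CoprodI M`
for a family `M : Fin 2 → Type*` of two groups).  `nf g` is the list of terms
(syllables) of the unique normal form of `g`, `len g` its length, and
`itype g` / `ttype g` are the indices of the free factors containing the first,
resp. last, term of the normal form (`none` for `g = 1`). -/

namespace FreeProdNF

open Monoid

variable {M : Fin 2 → Type*} [∀ i, Group (M i)]

open scoped Classical in
/-- The normal form of an element of the free product, as the list of its terms. -/
noncomputable def nf (g : CoprodI M) : List (Σ i, M i) :=
  (CoprodI.Word.equiv (M := M) g).toList

/-- The length `|g|` of an element of the free product. -/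
noncomputable def len (g : CoprodI M) : ℕ := (nf g).length

/-- The index of the free factor containing the first term of the normal form. -/
noncomputable def itype (g : CoprodI M) : Option (Fin 2) := (nf g).head?.map Sigma.fst

/-- The index of the free factor containing the last term of the normal form. -/
noncomputable def ttype (g : CoprodI M) : Option (Fin 2) := (nf g).getLast?.map Sigma.fst

open scoped Classical

/-! ### Auxiliary machinery -/

/-- The product of a list of letters. -/
noncomputable def prodl (L : List (Σ i, M i)) : CoprodI M :=
  (L.map fun s => CoprodI.of s.2).prod

lemma prodl_nil : prodl ([] : List (Σ i, M i)) = 1 := rfl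

lemma prodl_append (A B : List (Σ i, M i)) : prodl (A ++ B) = prodl A * prodl B := by
  simp [prodl]

lemma prodl_cons (s : (Σ i, M i)) (L : List (Σ i, M i)) :
    prodl (s :: L) = CoprodI.of s.2 * prodl L := by
  simp [prodl]

lemma nf_prodl {L : List (Σ i, M i)} (h1 : ∀ l ∈ L, l.2 ≠ 1)
    (h2 : L.Chain' fun a b => a.1 ≠ b.1) : nf (prodl L) = L := by
  have := (CoprodI.Word.equiv (M := M)).apply_symm_apply ⟨L, h1, h2⟩
  rw [nf, show (CoprodI.Word.equiv (M := M)).symm ⟨L, h1, h2⟩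
      = prodl L from rfl] at *
  rw [this]

lemma prodl_nf (g : CoprodI M) : prodl (nf g) = g := by
  have := (CoprodI.Word.equiv (M := M)).symm_apply_apply g
  rwa [show (CoprodI.Word.equiv (M := M)).symm (CoprodI.Word.equiv g)
      = prodl (nf g) from rfl] at this

lemma nf_ne_one (g : CoprodI M) : ∀ l ∈ nf g, l.2 ≠ 1 :=
  (CoprodI.Word.equiv (M := M) g).ne_one

lemma nf_chain (g : CoprodI M) : (nf g).Chain' fun a b => a.1 ≠ b.1 :=
  (CoprodI.Word.equiv (M := M) g).chain_ne

lemma len_prodl {L : List (Σ i, M i)} (h1 : ∀ l ∈ L, l.2 ≠ 1)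
    (h2 : L.Chain' fun a b => a.1 ≠ b.1) : len (prodl L) = L.length := by
  rw [len, nf_prodl h1 h2]

lemma len_one : len (1 : CoprodI M) = 0 := by
  have : nf (prodl ([] : List (Σ i, M i))) = [] := nf_prodl (by simp) List.isChain_nil
  simp only [prodl_nil] at this
  simp [len, this]

lemma eq_one_of_len_eq_zero {g : CoprodI M} (h : len g = 0) : g = 1 := by
  have hnf : nf g = [] := List.length_eq_zero_iff.mp h
  have hp := prodl_nf g
  rw [hnf, prodl_nil] at hp
  exact hp.symm

lemma len_of_ne_one {k : Fin 2} {a : M k} (ha : a ≠ 1) :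
    len (CoprodI.of a : CoprodI M) = 1 := by
  have : nf (prodl [⟨k, a⟩]) = [⟨k, a⟩] := nf_prodl (by simpa) (List.isChain_singleton _)
  have h2 : prodl [(⟨k, a⟩ : Σ i, M i)] = CoprodI.of a := by simp [prodl]
  rw [h2] at this
  simp [len, this]

lemma len_of_le {k : Fin 2} (a : M k) : len (CoprodI.of a : CoprodI M) ≤ 1 := by
  by_cases ha : a = 1
  · subst ha
    simp only [map_one]
    simp [len_one]
  · rw [len_of_ne_one ha]

lemma equiv_mul (x y : CoprodI M) :
    CoprodI.Word.equiv (M := M) (x * y) = x • CoprodI.Word.equiv (M := M) y :=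
  mul_smul x y (CoprodI.Word.empty (M := M))

lemma rcons_length {i : Fin 2} (p : CoprodI.Word.Pair M i) :
    (CoprodI.Word.rcons p).toList.length ≤ p.tail.toList.length + 1 := by
  rw [CoprodI.Word.rcons]
  split <;> simp [CoprodI.Word.cons]

lemma tail_length_le {i : Fin 2} (w : CoprodI.Word M) :
    (CoprodI.Word.equivPair i w).tail.toList.length ≤ w.toList.length := by
  have h := (CoprodI.Word.equivPair (M := M) i).symm_apply_apply w
  rw [CoprodI.Word.equivPair_symm] at h
  conv_rhs => rw [← h]
  rw [CoprodI.Word.rcons]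
  split <;> simp [CoprodI.Word.cons]

lemma len_of_mul_le {k : Fin 2} (m : M k) (g : CoprodI M) :
    len (CoprodI.of m * g) ≤ 1 + len g := by
  rw [len, nf, equiv_mul]
  rw [CoprodI.Word.of_smul_def]
  refine le_trans (rcons_length _) ?_
  have := tail_length_le (i := k) (CoprodI.Word.equiv (M := M) g)
  have hlen : len g = (CoprodI.Word.equiv (M := M) g).toList.length := rfl
  change (CoprodI.Word.equivPair k (CoprodI.Word.equiv (M := M) g)).tail.toList.length + 1 ≤ _
  omega

lemma len_mul_le (x y : CoprodI M) : len (x * y) ≤ len x + len y := by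
  have key : ∀ (L : List (Σ i, M i)) (y : CoprodI M),
      len (prodl L * y) ≤ L.length + len y := by
    intro L
    induction L with
    | nil => intro y; simp [prodl]
    | cons s L ih =>
      intro y
      have : prodl (s :: L) * y = CoprodI.of s.2 * (prodl L * y) := by
        simp [prodl, mul_assoc]
      rw [this]
      have h1 := len_of_mul_le (k := s.1) s.2 (prodl L * y)
      have h2 := ih y
      simp only [List.length_cons]
      omega
  have hx : prodl (nf x) = x := prodl_nf x
  have := key (nf x) y
  rw [hx] at this
  exact this

/-- The normal form of the inverse: reverse and invert every letter. -/
def invl (L : List (Σ i, M i)) : List (Σ i, M i) :=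
  (L.map fun s => ⟨s.1, s.2⁻¹⟩).reverse

lemma prodl_invl (L : List (Σ i, M i)) : prodl (invl L) = (prodl L)⁻¹ := by
  induction L with
  | nil => simp [invl, prodl]
  | cons s L ih =>
    have h1 : invl (s :: L) = invl L ++ [⟨s.1, s.2⁻¹⟩] := by simp [invl]
    rw [h1, prodl_append, ih]
    simp [prodl, mul_comm]

lemma invl_ne_one {L : List (Σ i, M i)} (h : ∀ l ∈ L, l.2 ≠ 1) :
    ∀ l ∈ invl L, l.2 ≠ 1 := by
  intro l hl
  simp only [invl, List.mem_reverse, List.mem_map] at hl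
  obtain ⟨a, ha, rfl⟩ := hl
  simpa using h a ha

lemma invl_chain {L : List (Σ i, M i)} (h : L.Chain' fun a b => a.1 ≠ b.1) :
    (invl L).Chain' fun a b => a.1 ≠ b.1 := by
  unfold List.Chain'
  rw [invl, List.isChain_reverse, List.isChain_map]
  refine h.imp ?_
  intro a b hab
  simpa [flip] using Ne.symm hab

lemma nf_inv (g : CoprodI M) : nf g⁻¹ = invl (nf g) := by
  have : g⁻¹ = prodl (invl (nf g)) := by rw [prodl_invl, prodl_nf]
  rw [this, nf_prodl (invl_ne_one (nf_ne_one g)) (invl_chain (nf_chain g))]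

lemma len_inv (g : CoprodI M) : len g⁻¹ = len g := by
  rw [len, nf_inv, invl]
  simp [len]

/-- The conclusion of the two-factor cancellation lemma. -/
def Conc (u v : CoprodI M) : Prop :=
  ∃ (k : Fin 2) (a b : M k) (p q r : CoprodI M),
    u = p * CoprodI.of a * q⁻¹ ∧ v = q * CoprodI.of b * r⁻¹ ∧
    u * v = p * CoprodI.of (a * b) * r⁻¹ ∧
    len u = len p + len (CoprodI.of a : CoprodI M) + len q ∧
    len v = len q + len (CoprodI.of b : CoprodI M) + len r ∧
    len (u * v) = len p + len (CoprodI.of (a * b) : CoprodI M) + len r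

lemma red_case (u v : CoprodI M) (hlen : len (u * v) = len u + len v) : Conc u v := by
  refine ⟨0, 1, 1, u, 1, v⁻¹, by simp, by simp, by simp, ?_, ?_, ?_⟩
  · simp [len_one]
  · simp [len_one, len_inv]
  · simp [len_one, len_inv, hlen]

lemma key : ∀ (n : ℕ) (u v : CoprodI M), len u + len v ≤ n → Conc u v := by
  intro n
  induction n with
  | zero =>
    intro u v h
    have hu : u = 1 := eq_one_of_len_eq_zero (by omega)
    apply red_case
    rw [hu]
    simp [len_one]
  | succ n ih =>
    intro u v hn
    rcases List.eq_nil_or_concat (nf u) with hU | ⟨LU', ⟨i, s⟩, hU⟩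
    · apply red_case
      have hu : u = 1 := by
        have := prodl_nf u; rw [hU, prodl_nil] at this; exact this.symm
      rw [hu]; simp [len_one]
    rw [List.concat_eq_append] at hU
    rcases hV : nf v with _ | ⟨⟨j, t⟩, LV'⟩
    · apply red_case
      have hv : v = 1 := by
        have := prodl_nf v; rw [hV, prodl_nil] at this; exact this.symm
      rw [hv]; simp [len_one]
    -- both nontrivial
    have hu_eq : u = prodl LU' * CoprodI.of s := by
      conv_lhs => rw [← prodl_nf u, hU]
      rw [prodl_append]
      simp [prodl]
    have hv_eq : v = CoprodI.of t * prodl LV' := by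
      conv_lhs => rw [← prodl_nf v, hV]
      rw [prodl_cons]
    have hs_ne : s ≠ 1 := nf_ne_one u ⟨i, s⟩ (by rw [hU]; simp)
    have ht_ne : t ≠ 1 := nf_ne_one v ⟨j, t⟩ (by rw [hV]; simp)
    have hchainU := nf_chain u
    rw [hU] at hchainU
    have hchainV := nf_chain v
    rw [hV] at hchainV
    have hU'ne : ∀ l ∈ LU', l.2 ≠ 1 := fun l hl => nf_ne_one u l (by rw [hU]; simp [hl])
    have hV'ne : ∀ l ∈ LV', l.2 ≠ 1 := fun l hl => nf_ne_one v l (by rw [hV]; simp [hl])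
    have hU'chain : LU'.Chain' fun a b => a.1 ≠ b.1 := (List.isChain_append.mp hchainU).1
    have hV'chain : LV'.Chain' fun a b => a.1 ≠ b.1 := (List.isChain_cons.mp hchainV).2
    have hlast : ∀ x ∈ LU'.getLast?, x.1 ≠ i := by
      intro x hx
      have := (List.isChain_append.mp hchainU).2.2 x hx ⟨i, s⟩ (by simp)
      exact this
    have hhead : ∀ y ∈ LV'.head?, j ≠ y.1 := by
      intro y hy
      exact (List.isChain_cons.mp hchainV).1 y hy
    have hlenu : len u = LU'.length + 1 := by rw [len, hU]; simp
    have hlenv : len v = LV'.length + 1 := by rw [len, hV]; simp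
    have hlenu1 : len (prodl LU') = LU'.length := len_prodl hU'ne hU'chain
    have hlenv1 : len (prodl LV') = LV'.length := len_prodl hV'ne hV'chain
    by_cases hij : i = j
    · subst hij
      by_cases hst : s * t = 1
      · -- full cancellation of boundary letters; use induction
        have hbound : len (prodl LU') + len (prodl LV') ≤ n := by omega
        obtain ⟨k, a, b, p, q, r, h1, h2, h3, h4, h5, h6⟩ :=
          ih (prodl LU') (prodl LV') hbound
        have hts : t = s⁻¹ := by
          have := inv_eq_of_mul_eq_one_right hst
          exact this.symm
        have huv_cancel : u * v = prodl LU' * prodl LV' := by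
          rw [hu_eq, hv_eq, mul_assoc, ← mul_assoc (CoprodI.of s), ← map_mul, hst,
            map_one, one_mul]
        have g1 : u = p * CoprodI.of a * (CoprodI.of t * q)⁻¹ := by
          rw [hu_eq, h1, hts, map_inv]
          group
        have g2 : v = (CoprodI.of t * q) * CoprodI.of b * r⁻¹ := by
          rw [hv_eq, h2]
          group
        have hq' : len (CoprodI.of t * q) = len q + 1 := by
          have hup : len (CoprodI.of t * q) ≤ 1 + len q := len_of_mul_le _ _
          have hlow : len u ≤ len p + len (CoprodI.of a : CoprodI M)
              + len (CoprodI.of t * q) := by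
            calc len u = len ((p * CoprodI.of a) * (CoprodI.of t * q)⁻¹) := by
                  rw [← g1]
              _ ≤ len (p * CoprodI.of a) + len ((CoprodI.of t * q)⁻¹) := len_mul_le _ _
              _ ≤ len p + len (CoprodI.of a : CoprodI M) + len (CoprodI.of t * q) := by
                  have := len_mul_le p (CoprodI.of a)
                  have := len_inv (CoprodI.of t * q)
                  omega
          omega
        refine ⟨k, a, b, p, CoprodI.of t * q, r, g1, g2, ?_, ?_, ?_, ?_⟩
        · rw [huv_cancel]; exact h3
        · omega
        · omega
        · rw [huv_cancel]; exact h6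
      · -- boundary letters merge into a single nontrivial letter
        have huv : u * v = prodl LU' * CoprodI.of (s * t) * prodl LV' := by
          rw [hu_eq, hv_eq, map_mul]
          group
        have hred : u * v = prodl (LU' ++ ⟨i, s * t⟩ :: LV') := by
          rw [prodl_append, prodl_cons, huv]
          group
        have hne : ∀ l ∈ LU' ++ ⟨i, s * t⟩ :: LV', l.2 ≠ 1 := by
          intro l hl
          rcases List.mem_append.mp hl with h | h
          · exact hU'ne l h
          · rcases List.mem_cons.mp h with rfl | h
            · exact hst
            · exact hV'ne l h
        have hch : (LU' ++ ⟨i, s * t⟩ :: LV').Chain' fun a b => a.1 ≠ b.1 := by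
          unfold List.Chain'
          rw [List.isChain_append]
          refine ⟨hU'chain, List.isChain_cons.mpr ⟨hhead, hV'chain⟩, ?_⟩
          intro x hx y hy
          simp only [List.head?_cons, Option.mem_def, Option.some.injEq] at hy
          subst hy
          exact hlast x hx
        have hlenuv : len (u * v) = LU'.length + 1 + LV'.length := by
          rw [hred, len_prodl hne hch]
          simp only [List.length_append, List.length_cons]
          omega
        refine ⟨i, s, t, prodl LU', 1, (prodl LV')⁻¹, ?_, ?_, ?_, ?_, ?_, ?_⟩
        · rw [hu_eq]; simp
        · rw [hv_eq]; simp
        · rw [huv]; simp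
        · rw [len_of_ne_one hs_ne, len_one]; omega
        · rw [len_of_ne_one ht_ne, len_one, len_inv]; omega
        · rw [len_of_ne_one hst, len_inv]; omega
    · -- boundary letters in different factors: no cancellation at all
      apply red_case
      have huv : u * v = prodl (nf u ++ nf v) := by
        rw [prodl_append, prodl_nf, prodl_nf]
      have hne : ∀ l ∈ nf u ++ nf v, l.2 ≠ 1 := by
        intro l hl
        rcases List.mem_append.mp hl with h | h
        · exact nf_ne_one u l h
        · exact nf_ne_one v l h
      have hch : (nf u ++ nf v).Chain' fun a b => a.1 ≠ b.1 := by
        unfold List.Chain'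
        rw [List.isChain_append]
        refine ⟨nf_chain u, nf_chain v, ?_⟩
        intro x hx y hy
        rw [hU] at hx
        rw [hV] at hy
        simp only [List.getLast?_concat, Option.mem_def, Option.some.injEq] at hx
        simp only [List.head?_cons, Option.mem_def, Option.some.injEq] at hy
        subst hx; subst hy
        exact hij
      rw [huv, len_prodl hne hch]
      simp [len]

/-- (Cancellation scheme for a triangle.)  If `u * v * w = 1` in a
free product `G = G₁ ∗ G₂`, then there are elements `p q r` of `G`, an index
`k ∈ {1,2}` and elements `c₁ c₂ c₃` of the free factor `G_k` with `c₁c₂c₃ = 1`,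
such that `u = p c₁ q⁻¹`, `v = q c₂ r⁻¹`, `w = r c₃ p⁻¹`, each product being
reduced as written. -/
theorem triangle_cancellation (u v w : CoprodI M) (h : u * v * w = 1) :
    ∃ (k : Fin 2) (c₁ c₂ c₃ : M k) (p q r : CoprodI M),
      c₁ * c₂ * c₃ = 1 ∧
      u = p * CoprodI.of c₁ * q⁻¹ ∧
      v = q * CoprodI.of c₂ * r⁻¹ ∧
      w = r * CoprodI.of c₃ * p⁻¹ ∧
      len u = len p + len (CoprodI.of c₁ : CoprodI M) + len q ∧
      len v = len q + len (CoprodI.of c₂ : CoprodI M) + len r ∧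
      len w = len r + len (CoprodI.of c₃ : CoprodI M) + len p := by
  obtain ⟨k, a, b, p, q, r, h1, h2, h3, h4, h5, h6⟩ := key (len u + len v) u v le_rfl
  have hw : w = (u * v)⁻¹ := eq_inv_of_mul_eq_one_right h
  refine ⟨k, a, b, (a * b)⁻¹, p, q, r, by group, h1, h2, ?_, h4, h5, ?_⟩
  · rw [hw, h3, map_inv]
    group
  · rw [hw, len_inv, h6]
    have : len (CoprodI.of ((a * b)⁻¹) : CoprodI M)
        = len (CoprodI.of (a * b) : CoprodI M) := by
      rw [map_inv, len_inv]
    omega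

end FreeProdNF
end

section
/- Let G be an equationally Noetherian group and let n ≥ 1. Then there is no infinite strictly descending chain V₀ ⊋ V₁ ⊋ V₂ ⊋ ⋯ of algebraic subsets of Gⁿ; that is, every descending chain of algebraic subsets of Gⁿ stabilises. (Equivalently, every strictly ascending chain of radical subgroups of G[x₁,…,xₙ] is finite; this is the Noetherian property of the Zariski topology used to guarantee that the iterated construction of solution trees terminates.) -/
/-!  Basic algebraic geometry over a group `K` (Baumslag–Miasnikov–Remeslennikov).
`GX K V = K ∗ F(V)` is the group of words in variables `V` with constants in `K`;
`eval v` is the evaluation homomorphism determined by an assignment `v : V → K`;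
`VG S` is the algebraic set (solution set) of a system `S ⊆ GX K V`;
`radical S` is the radical of `S` and `Coord S = (K ∗ F(V)) ⧸ radical S`
its coordinate group. -/

namespace EqAlg

/-- Over an equationally Noetherian group `G`, every descending
chain of algebraic subsets of `Gⁿ` stabilises; in particular there is no
infinite strictly descending chain of algebraic sets. -/
theorem descending_chain_of_algebraic_sets_stabilises
    {G : Type*} [Group G] (hG : EquationallyNoetherian G)
    (n : ℕ) (hn : 1 ≤ n) (V : ℕ → Set (Fin n → G))
    (halg : ∀ m, ∃ S : Set (GX G (Fin n)), V m = VG S)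
    (hdesc : ∀ m, V (m + 1) ⊆ V m) :
    ∃ N, ∀ m, N ≤ m → V m = V N := by
  -- choose systems
  choose S hS using halg
  -- antitone: VG is antitone in the system
  have hVGanti : ∀ (A B : Set (GX G (Fin n))), A ⊆ B → VG B ⊆ VG A := by
    intro A B hAB v hv w hw
    exact hv w (hAB hw)
  -- chain is antitone
  have hchain : ∀ k m, k ≤ m → V m ⊆ V k := by
    intro k m hkm
    induction m with
    | zero => simpa [Nat.le_zero.mp hkm] using Set.Subset.rfl
    | succ m ih =>
      rcases Nat.lt_or_ge k (m + 1) with h | h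
      · exact (hdesc m).trans (ih (Nat.lt_succ_iff.mp h))
      · have : k = m + 1 := le_antisymm hkm h
        simp [this]
  -- the big system
  set T : Set (GX G (Fin n)) := ⋃ k, S k with hT
  -- VG T ⊆ V m for all m
  have hTsub : ∀ m, VG T ⊆ V m := by
    intro m
    rw [hS m]
    exact hVGanti _ _ (Set.subset_iUnion S m)
  obtain ⟨S₀, hS₀T, hS₀fin, hS₀eq⟩ := hG n T
  -- each element of S₀ lies in some S k; take max index
  have hmem : ∀ w ∈ S₀, ∃ k, w ∈ S k := by
    intro w hw
    exact Set.mem_iUnion.mp (hS₀T hw)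
  classical
  choose f hf using hmem
  set N : ℕ := hS₀fin.toFinset.attach.sup
    (fun w => f w.1 (hS₀fin.mem_toFinset.mp w.2)) with hN
  refine ⟨N, fun m hNm => ?_⟩
  -- V N ⊆ VG S₀
  have hVN : V N ⊆ VG S₀ := by
    intro v hv w hw
    have hk : f w hw ≤ N :=
      Finset.le_sup (f := fun w => f w.1 (hS₀fin.mem_toFinset.mp w.2))
        (Finset.mem_attach _ ⟨w, hS₀fin.mem_toFinset.mpr hw⟩)
    have hvk : v ∈ V (f w hw) := hchain _ _ hk hv
    rw [hS (f w hw)] at hvk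
    exact hvk w (hf w hw)
  have h1 : V N ⊆ VG T := hS₀eq ▸ hVN
  apply Set.Subset.antisymm
  · exact hchain N m hNm
  · exact (h1.trans (hTsub m))

end EqAlg
end
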